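/- For the polar quadrilateral family (tangent lines to the parabola at the four vertices of the Poncelet quadrilateral), each vertex lies on the hyperbola (x−f)²/(4(√5−2)f²) − y²/(4f²) − 1 = 0, centered at (f, 0) with foci (f ± 2f√(√5−1), 0). -/

import Mathlib

private theorem on_hyp_aux (f a b s : ℝ) (hf : f ≠ 0) (hs2 : s - 2 ≠ 0)
    (h : (a*b + 4*f^2)^2 = 4*(s-2)*f^2*(a+b)^2 + 64*(s-2)*f^4) :
    (-(a*b)/(4*f) - f)^2/(4*(s-2)*f^2) - ((a+b)/2)^2/(4*f^2) - 1 = 0 := by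
  have key : (-(a*b)/(4*f) - f)^2/(4*(s-2)*f^2) - ((a+b)/2)^2/(4*f^2) - 1 =
      ((a*b+4*f^2)^2 - (4*(s-2)*f^2*(a+b)^2 + 64*(s-2)*f^4))/(64*(s-2)*f^4) := by
    field_simp
    ring
  rw [key, h, sub_self, zero_div]

/-- Each vertex of the polar quadrilateral (intersection of consecutive tangent lines to the
parabola `x = −y²/(4f)` at the Poncelet quadrilateral's vertices; the tangents at parameters
`a, b` meet at `(−ab/(4f), (a+b)/2)`) lies on the hyperbola
`(x−f)²/(4(√5−2)f²) − y²/(4f²) − 1 = 0`, centered at `(f,0)`, whose foci are at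
`(f ± 2f√(√5−1), 0)` (i.e. `c² = a² + b²` holds with `c = 2f√(√5−1)`). -/
theorem polar_quadrilateral_on_hyperbola (f y₁ Δ₁ y₂ y₃ y₄ : ℝ) (hf : 0 < f)
    (hy₁ : y₁ ≠ 0)
    (hΔ₁ : Δ₁ = Real.sqrt (y₁ ^ 4 + 8 * f ^ 2 * y₁ ^ 2 + 16 * (9 - 4 * Real.sqrt 5) * f ^ 4))
    (hden : 4 * f ^ 2 * Real.sqrt 5 - 8 * f ^ 2 - y₁ ^ 2 ≠ 0)
    (hy₂ : y₂ = (2 * Real.sqrt (Real.sqrt 5 - 2) * Δ₁ + 4 * f * y₁ * (3 - Real.sqrt 5)) * f /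
      (4 * f ^ 2 * Real.sqrt 5 - 8 * f ^ 2 - y₁ ^ 2))
    (hy₃ : y₃ = 4 * (2 - Real.sqrt 5) * f ^ 2 / y₁)
    (hy₄ : y₄ = -((2 * Real.sqrt (Real.sqrt 5 - 2) * Δ₁ + 4 * f * y₁ * (Real.sqrt 5 - 3)) * f /
      (4 * f ^ 2 * Real.sqrt 5 - 8 * f ^ 2 - y₁ ^ 2)))
    (Q₁ Q₂ Q₃ Q₄ : ℝ × ℝ)
    (hQ₁ : Q₁ = (-(y₁ * y₂) / (4 * f), (y₁ + y₂) / 2))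
    (hQ₂ : Q₂ = (-(y₂ * y₃) / (4 * f), (y₂ + y₃) / 2))
    (hQ₃ : Q₃ = (-(y₃ * y₄) / (4 * f), (y₃ + y₄) / 2))
    (hQ₄ : Q₄ = (-(y₄ * y₁) / (4 * f), (y₄ + y₁) / 2)) :
    ((Q₁.1 - f) ^ 2 / (4 * (Real.sqrt 5 - 2) * f ^ 2) - Q₁.2 ^ 2 / (4 * f ^ 2) - 1 = 0) ∧
    ((Q₂.1 - f) ^ 2 / (4 * (Real.sqrt 5 - 2) * f ^ 2) - Q₂.2 ^ 2 / (4 * f ^ 2) - 1 = 0) ∧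
    ((Q₃.1 - f) ^ 2 / (4 * (Real.sqrt 5 - 2) * f ^ 2) - Q₃.2 ^ 2 / (4 * f ^ 2) - 1 = 0) ∧
    ((Q₄.1 - f) ^ 2 / (4 * (Real.sqrt 5 - 2) * f ^ 2) - Q₄.2 ^ 2 / (4 * f ^ 2) - 1 = 0) ∧
    (2 * f * Real.sqrt (Real.sqrt 5 - 1)) ^ 2 =
      4 * (Real.sqrt 5 - 2) * f ^ 2 + 4 * f ^ 2 := by
  have hf' : f ≠ 0 := ne_of_gt hf
  set s := Real.sqrt 5 with hsdef
  set r := Real.sqrt (s - 2) with hrdef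
  have hs5 : s ^ 2 = 5 := Real.sq_sqrt (by norm_num)
  have hs0 : 0 ≤ s := Real.sqrt_nonneg 5
  have h2s : 2 < s := by nlinarith
  have hs94 : s ≤ 9/4 := by nlinarith
  have hs2 : s - 2 ≠ 0 := by linarith [h2s]; 
  have hr2 : r ^ 2 = s - 2 := Real.sq_sqrt (by linarith)
  have hΔ : Δ₁ ^ 2 = y₁ ^ 4 + 8 * f ^ 2 * y₁ ^ 2 + 16 * (9 - 4 * s) * f ^ 4 := by
    rw [hΔ₁]
    exact Real.sq_sqrt (by nlinarith [sq_nonneg y₁, sq_nonneg (y₁^2), sq_nonneg f, sq_nonneg (f^2), sq_nonneg (f*y₁)])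
  have key1 : (y₁*y₂ + 4*f^2)^2 = 4*(s-2)*f^2*(y₁+y₂)^2 + 64*(s-2)*f^4 := by
    rw [hy₂]; have hden' : f ^ 2 * (4 * s - 8) - y₁ ^ 2 ≠ 0 := by contrapose! hden; linear_combination hden
    field_simp
    linear_combination ((32)*f^2*r^2 + (-16)*f^2*r^2*s + (4)*y₁^2*r^2) * hΔ +
      ((4608)*f^6 + (-4352)*f^6*s + (1024)*f^6*s^2 + (832)*y₁^2*f^4 + (-384)*y₁^2*f^4*s + (64)*y₁^4*f^2 + (-16)*y₁^4*f^2*s + (4)*y₁^6) * hr2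
  have key4 : (y₄*y₁ + 4*f^2)^2 = 4*(s-2)*f^2*(y₄+y₁)^2 + 64*(s-2)*f^4 := by
    rw [hy₄]; have hden' : f ^ 2 * (4 * s - 8) - y₁ ^ 2 ≠ 0 := by contrapose! hden; linear_combination hden
    field_simp
    linear_combination ((32)*f^2*r^2 + (-16)*f^2*r^2*s + (4)*y₁^2*r^2) * hΔ +
      ((4608)*f^6 + (-4352)*f^6*s + (1024)*f^6*s^2 + (832)*y₁^2*f^4 + (-384)*y₁^2*f^4*s + (64)*y₁^4*f^2 + (-16)*y₁^4*f^2*s + (4)*y₁^6) * hr2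
  have key2 : (y₂*y₃ + 4*f^2)^2 = 4*(s-2)*f^2*(y₂+y₃)^2 + 64*(s-2)*f^4 := by
    rw [hy₂, hy₃]; have hden' : f ^ 2 * (4 * s - 8) - y₁ ^ 2 ≠ 0 := by contrapose! hden; linear_combination hden
    field_simp
    linear_combination ((256)*f^2*r^2 + (-256)*f^2*r^2*s + (64)*f^2*r^2*s^2 + (32)*y₁^2*r^2 + (-16)*y₁^2*r^2*s) * hΔ +
      ((36864)*f^6 + (-53248)*f^6*s + (25600)*f^6*s^2 + (-4096)*f^6*s^3 + (6656)*y₁^2*f^4 + (-6400)*y₁^2*f^4*s + (1536)*y₁^2*f^4*s^2 + (512)*y₁^4*f^2 + (-384)*y₁^4*f^2*s + (64)*y₁^4*f^2*s^2 + (32)*y₁^6 + (-16)*y₁^6*s) * hr2 +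
      ((8192)*f^6 + (-12288)*f^6*s + (6144)*f^6*s^2 + (-1024)*f^6*s^3 + (1024)*y₁^2*f^4 + (-1024)*y₁^2*f^4*s + (256)*y₁^2*f^4*s^2 + (-128)*y₁^4*f^2 + (64)*y₁^4*f^2*s + (-16)*y₁^6) * hs5
  have key3 : (y₃*y₄ + 4*f^2)^2 = 4*(s-2)*f^2*(y₃+y₄)^2 + 64*(s-2)*f^4 := by
    rw [hy₃, hy₄]; have hden' : f ^ 2 * (4 * s - 8) - y₁ ^ 2 ≠ 0 := by contrapose! hden; linear_combination hden
    field_simp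
    linear_combination ((256)*f^2*r^2 + (-256)*f^2*r^2*s + (64)*f^2*r^2*s^2 + (32)*y₁^2*r^2 + (-16)*y₁^2*r^2*s) * hΔ +
      ((36864)*f^6 + (-53248)*f^6*s + (25600)*f^6*s^2 + (-4096)*f^6*s^3 + (6656)*y₁^2*f^4 + (-6400)*y₁^2*f^4*s + (1536)*y₁^2*f^4*s^2 + (512)*y₁^4*f^2 + (-384)*y₁^4*f^2*s + (64)*y₁^4*f^2*s^2 + (32)*y₁^6 + (-16)*y₁^6*s) * hr2 +
      ((8192)*f^6 + (-12288)*f^6*s + (6144)*f^6*s^2 + (-1024)*f^6*s^3 + (1024)*y₁^2*f^4 + (-1024)*y₁^2*f^4*s + (256)*y₁^2*f^4*s^2 + (-128)*y₁^4*f^2 + (64)*y₁^4*f^2*s + (-16)*y₁^6) * hs5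
  refine ⟨?_, ?_, ?_, ?_, ?_⟩
  · rw [hQ₁]; exact on_hyp_aux f y₁ y₂ s hf' hs2 key1
  · rw [hQ₂]; exact on_hyp_aux f y₂ y₃ s hf' hs2 key2
  · rw [hQ₃]; exact on_hyp_aux f y₃ y₄ s hf' hs2 key3
  · rw [hQ₄]; exact on_hyp_aux f y₄ y₁ s hf' hs2 key4
  · have h1 : Real.sqrt (s - 1) ^ 2 = s - 1 := Real.sq_sqrt (by linarith)
    linear_combination 4 * f ^ 2 * h1
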